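/- If G is standard Gumbel, then for any w > 0, P(log w + G ≤ t) = exp(−w e^{−t}); consequently, for independent standard Gumbels, P(log w_i + G_i = max_j (log w_j + G_j)) = w_i/∑_j w_j and the max is independent of the argmax. -/

import Mathlib

open MeasureTheory ProbabilityTheory Set Filter Real Topology


private lemma gum_hasDeriv (a : ℝ) (ha : 0 < a) (x : ℝ) :
    HasDerivAt (fun y => a⁻¹ * Real.exp (-(a * Real.exp (-y))))
      (Real.exp (-x) * Real.exp (-(a * Real.exp (-x)))) x := by
  have h1 : HasDerivAt (fun y : ℝ => -y) (-1) x := (hasDerivAt_id x).neg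
  have h2 : HasDerivAt (fun y : ℝ => Real.exp (-y)) (Real.exp (-x) * -1) x := h1.exp
  have h3 : HasDerivAt (fun y : ℝ => -(a * Real.exp (-y))) (-(a * (Real.exp (-x) * -1))) x :=
    (h2.const_mul a).neg
  have h4 := (h3.exp).const_mul a⁻¹
  refine h4.congr_deriv ?_
  field_simp

private lemma gum_integrableOn (a : ℝ) (ha : 0 < a) (b : ℝ) :
    IntegrableOn (fun x => Real.exp (-x) * Real.exp (-(a * Real.exp (-x)))) (Iic b) := by
  have hbound : ∀ x : ℝ, ‖Real.exp (-x) * Real.exp (-(a * Real.exp (-x)))‖ ≤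
      (4 / a ^ 2) * Real.exp x := by
    intro x
    have hu : 0 < Real.exp (-x) := Real.exp_pos _
    rw [Real.norm_eq_abs, abs_of_nonneg (by positivity)]
    set u := Real.exp (-x) with hu_def
    have key : u ^ 2 * Real.exp (-(a * u)) ≤ 4 / a ^ 2 := by
      have h1 : a * u / 2 ≤ Real.exp (a * u / 2) := by
        linarith [Real.add_one_le_exp (a * u / 2)]
      have h2 : (a * u / 2) ^ 2 ≤ Real.exp (a * u) := by
        calc (a * u / 2) ^ 2 ≤ Real.exp (a * u / 2) ^ 2 := by
              apply pow_le_pow_left₀ (by positivity) h1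
          _ = Real.exp (a * u) := by rw [← Real.exp_nat_mul]; ring_nf
      have hE : (0:ℝ) < Real.exp (a * u) := Real.exp_pos _
      rw [Real.exp_neg, ← div_eq_mul_inv, div_le_div_iff₀ hE (by positivity)]
      nlinarith [h2]
    have hx : Real.exp x = u⁻¹ := by rw [hu_def, ← Real.exp_neg, neg_neg]
    rw [hx]
    calc u * Real.exp (-(a * u)) = (u ^ 2 * Real.exp (-(a * u))) * u⁻¹ := by
          field_simp
      _ ≤ (4 / a ^ 2) * u⁻¹ := by gcongr
  apply Integrable.mono' ((integrableOn_exp_Iic b).const_mul (4 / a ^ 2))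
  · exact (Continuous.mul (by continuity) (by continuity)).aestronglyMeasurable
  · exact Eventually.of_forall hbound

private lemma gum_lintegral (a : ℝ) (ha : 0 < a) (b : ℝ) :
    ∫⁻ x in Iic b, ENNReal.ofReal (Real.exp (-x) * Real.exp (-(a * Real.exp (-x)))) =
      ENNReal.ofReal (a⁻¹ * Real.exp (-(a * Real.exp (-b)))) := by
  have hint := gum_integrableOn a ha b
  rw [← ofReal_integral_eq_lintegral_ofReal hint
    (Eventually.of_forall fun x => by positivity)]
  congr 1
  have htend : Tendsto (fun y => a⁻¹ * Real.exp (-(a * Real.exp (-y)))) atBot (𝓝 0) := by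
    have h0 : Tendsto (fun y : ℝ => Real.exp (-y)) atBot atTop :=
      Real.tendsto_exp_atTop.comp tendsto_neg_atBot_atTop
    have h1 : Tendsto (fun y : ℝ => a * Real.exp (-y)) atBot atTop := h0.const_mul_atTop ha
    have h2 : Tendsto (fun y : ℝ => -(a * Real.exp (-y))) atBot atBot :=
      tendsto_neg_atBot_iff.mpr h1
    have h3 := (Real.tendsto_exp_atBot.comp h2).const_mul a⁻¹
    simpa using h3
  have := integral_Iic_of_hasDerivAt_of_tendsto' (f := fun y => a⁻¹ * Real.exp (-(a * Real.exp (-y))))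
    (fun x _ => gum_hasDeriv a ha x) hint htend
  rw [this, sub_zero]

noncomputable def gum : Measure ℝ :=
  MeasureTheory.volume.withDensity fun x =>
    ENNReal.ofReal (Real.exp (-x) * Real.exp (-(1 * Real.exp (-x))))

private lemma gum_den_meas (a : ℝ) :
    Measurable fun x => ENNReal.ofReal (Real.exp (-x) * Real.exp (-(a * Real.exp (-x)))) := by
  apply ENNReal.measurable_ofReal.comp
  fun_prop

private lemma gum_Iic (t : ℝ) : gum (Iic t) = ENNReal.ofReal (Real.exp (-Real.exp (-t))) := by
  rw [gum, withDensity_apply _ measurableSet_Iic, gum_lintegral 1 one_pos t]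
  norm_num

private lemma gum_singleton (t : ℝ) : gum {t} = 0 :=
  withDensity_absolutelyContinuous MeasureTheory.volume _ (volume_singleton)

private lemma gum_Iio (t : ℝ) : gum (Iio t) = ENNReal.ofReal (Real.exp (-Real.exp (-t))) := by
  have : Iio t = Iic t \ {t} := by ext x; simp [lt_iff_le_and_ne]
  rw [this, measure_diff_null (gum_singleton t), gum_Iic]

private lemma tend_aux (c d : ℝ) (hd : 0 ≤ d) :
    Tendsto (fun k : ℕ => ENNReal.ofReal (d * Real.exp (-(c * Real.exp (-(k : ℝ))))))
      atTop (𝓝 (ENNReal.ofReal d)) := by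
  have h1 : Tendsto (fun k : ℕ => -(k : ℝ)) atTop atBot :=
    tendsto_neg_atBot_iff.mpr tendsto_natCast_atTop_atTop
  have h2 : Tendsto (fun k : ℕ => Real.exp (-(k : ℝ))) atTop (𝓝 0) :=
    Real.tendsto_exp_atBot.comp h1
  have h3 : Tendsto (fun k : ℕ => d * Real.exp (-(c * Real.exp (-(k : ℝ))))) atTop (𝓝 d) := by
    have h4 : Tendsto (fun k : ℕ => -(c * Real.exp (-(k : ℝ)))) atTop (𝓝 0) := by
      simpa using ((h2.const_mul c).neg)
    have h5 := (Real.continuous_exp.tendsto 0).comp h4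
    simpa using h5.const_mul d
  exact (ENNReal.continuous_ofReal.tendsto d).comp h3

instance : IsProbabilityMeasure gum := by
  constructor
  have hu : (univ : Set ℝ) = ⋃ k : ℕ, Iic (k : ℝ) := by
    ext x; simp only [mem_univ, mem_iUnion, mem_Iic, true_iff]
    obtain ⟨k, hk⟩ := exists_nat_ge x
    exact ⟨k, hk⟩
  have hmono : Monotone fun k : ℕ => Iic (k : ℝ) := fun a b hab =>
    Iic_subset_Iic.mpr (by exact_mod_cast hab)
  have h1 := tendsto_measure_iUnion_atTop (μ := gum) hmono
  rw [← hu] at h1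
  have h2 : Tendsto (gum ∘ fun k : ℕ => Iic (k : ℝ)) atTop (𝓝 (ENNReal.ofReal 1)) := by
    have := tend_aux 1 1 zero_le_one
    simp only [Function.comp_def, gum_Iic]
    simpa using this
  simpa using tendsto_nhds_unique h1 h2

private lemma gum_pi_core {n : ℕ} (w : Fin (n + 1) → ℝ) (hw : ∀ i, 0 < w i)
    (i : Fin (n + 1)) (b : ℝ) :
    Measure.pi (fun _ : Fin (n + 1) => gum)
      {x | (∀ j, j ≠ i → Real.log (w j) + x j < Real.log (w i) + x i) ∧
        Real.log (w i) + x i ≤ b} =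
      ENNReal.ofReal ((w i / ∑ j, w j) *
        Real.exp (-((∑ j, w j) * Real.exp (-b)))) := by
  set S := ∑ j, w j with hS_def
  have hS : 0 < S := Finset.sum_pos (fun j _ => hw j) ⟨i, Finset.mem_univ i⟩
  have hwi : w i ≠ 0 := (hw i).ne'
  set c : Fin (n + 1) → ℝ := fun j => Real.log (w j) with hc
  set e := MeasurableEquiv.piFinSuccAbove (fun _ : Fin (n + 1) => ℝ) i with he
  have hmp := measurePreserving_piFinSuccAbove (fun _ : Fin (n + 1) => gum) i
  set T : Set (ℝ × (Fin n → ℝ)) :=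
    {p | (∀ j, p.2 j < p.1 + c i - c (i.succAbove j)) ∧ p.1 ≤ b - c i} with hT
  have hTm : MeasurableSet T := by
    have h1 : MeasurableSet {p : ℝ × (Fin n → ℝ) | ∀ j, p.2 j < p.1 + c i - c (i.succAbove j)} := by
      rw [setOf_forall]
      exact MeasurableSet.iInter fun j => measurableSet_lt (by fun_prop) (by fun_prop)
    have h2 : MeasurableSet {p : ℝ × (Fin n → ℝ) | p.1 ≤ b - c i} :=
      measurable_fst measurableSet_Iic
    exact h1.inter h2
  have hpre : e ⁻¹' T = {x | (∀ j, j ≠ i → c j + x j < c i + x i) ∧ c i + x i ≤ b} := by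
    ext x
    have hxe : e x = (x i, fun j => x (i.succAbove j)) := rfl
    simp only [mem_preimage, hxe, hT, mem_setOf_eq]
    constructor
    · rintro ⟨h1, h2⟩
      refine ⟨fun j hj => ?_, by linarith⟩
      obtain ⟨k, rfl⟩ := Fin.exists_succAbove_eq hj
      have := h1 k
      linarith
    · rintro ⟨h1, h2⟩
      refine ⟨fun j => ?_, by linarith⟩
      have := h1 (i.succAbove j) (Fin.succAbove_ne i j)
      linarith
  rw [← hpre, hmp.measure_preimage hTm.nullMeasurableSet, Measure.prod_apply hTm]
  have hsum : ∑ j : Fin n, w (i.succAbove j) = S - w i := by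
    rw [hS_def, Fin.sum_univ_succAbove w i]; ring
  have hslice : ∀ y : ℝ, (Measure.pi fun _ : Fin n => gum) (Prod.mk y ⁻¹' T) =
      (Iic (b - c i)).indicator
        (fun y => ENNReal.ofReal (Real.exp (-(((S - w i) / w i) * Real.exp (-y))))) y := by
    intro y
    by_cases hy : y ≤ b - c i
    · rw [indicator_of_mem (show y ∈ Iic (b - c i) from hy)]
      have hset : Prod.mk y ⁻¹' T = univ.pi fun j => Iio (y + c i - c (i.succAbove j)) := by
        ext z
        simp only [hT, mem_preimage, mem_setOf_eq, mem_univ_pi, mem_Iio]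
        exact ⟨fun h => h.1, fun h => ⟨h, hy⟩⟩
      rw [hset, Measure.pi_pi]
      have hval : ∀ j : Fin n, gum (Iio (y + c i - c (i.succAbove j))) =
          ENNReal.ofReal (Real.exp (-(w (i.succAbove j) / w i * Real.exp (-y)))) := by
        intro j
        rw [gum_Iio]
        congr 2
        rw [hc, show -(y + Real.log (w i) - Real.log (w (i.succAbove j))) =
          Real.log (w (i.succAbove j) / w i) + -y by
            rw [Real.log_div (ne_of_gt (hw _)) (ne_of_gt (hw i))]; ring]
        rw [Real.exp_add, Real.exp_log (div_pos (hw _) (hw i))]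
      simp_rw [hval]
      rw [← ENNReal.ofReal_prod_of_nonneg (fun j _ => (Real.exp_pos _).le), ← Real.exp_sum]
      congr 2
      rw [Finset.sum_neg_distrib]
      congr 1
      rw [← Finset.sum_mul, ← Finset.sum_div, hsum]
    · rw [indicator_of_notMem (show y ∉ Iic (b - c i) from hy)]
      have hset : Prod.mk y ⁻¹' T = ∅ := by
        ext z
        simp only [hT, mem_preimage, mem_setOf_eq, mem_empty_iff_false, iff_false, not_and]
        exact fun _ => hy
      rw [hset, measure_empty]
  simp_rw [hslice]
  rw [lintegral_indicator measurableSet_Iic, gum,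
    setLIntegral_withDensity_eq_setLIntegral_mul _ (by fun_prop)
      (by fun_prop) measurableSet_Iic]
  have hcomb : ∀ x : ℝ,
      ((fun x => ENNReal.ofReal (Real.exp (-x) * Real.exp (-(1 * Real.exp (-x))))) *
        fun x => ENNReal.ofReal (Real.exp (-(((S - w i) / w i) * Real.exp (-x))))) x =
      ENNReal.ofReal (Real.exp (-x) * Real.exp (-((S / w i) * Real.exp (-x)))) := by
    intro x
    simp only [Pi.mul_apply]
    rw [← ENNReal.ofReal_mul (by positivity)]
    congr 1
    have harg : -(1 * Real.exp (-x)) + -(((S - w i) / w i) * Real.exp (-x)) =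
        -((S / w i) * Real.exp (-x)) := by
      field_simp
      ring
    rw [mul_assoc, ← Real.exp_add, harg]
  simp_rw [hcomb]
  rw [gum_lintegral (S / w i) (div_pos hS (hw i)) (b - c i)]
  congr 1
  rw [inv_div]
  congr 2
  rw [hc, show -(b - Real.log (w i)) = Real.log (w i) + -b by ring,
    Real.exp_add, Real.exp_log (hw i)]
  field_simp

/-- Gumbel shifting, argmax probability, and independence of max and argmax:
(1) `P(log w + G ≤ t) = exp (−w e^{−t})`;
(2) `P(i is the argmax of log w_j + G_j) = w i / ∑ j, w j`;
(3) the events "argmax = i" and "max ≤ t" are independent. -/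
theorem stmt_18 {Ω : Type*} [MeasurableSpace Ω] (μ : Measure Ω) [IsProbabilityMeasure μ]
    (N : ℕ) (hN : 0 < N) (G : Fin N → Ω → ℝ) (hGmeas : ∀ i, Measurable (G i))
    (hindep : iIndepFun G μ)
    (hgumbel : ∀ i t, μ {ω | G i ω ≤ t} = ENNReal.ofReal (Real.exp (-Real.exp (-t))))
    (w : Fin N → ℝ) (hw : ∀ i, 0 < w i) :
    (∀ i t, μ {ω | Real.log (w i) + G i ω ≤ t} =
        ENNReal.ofReal (Real.exp (-(w i * Real.exp (-t))))) ∧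
    (∀ i, μ {ω | ∀ j, j ≠ i → Real.log (w j) + G j ω < Real.log (w i) + G i ω} =
        ENNReal.ofReal (w i / ∑ j, w j)) ∧
    (∀ i t, μ ({ω | ∀ j, j ≠ i → Real.log (w j) + G j ω < Real.log (w i) + G i ω} ∩
                {ω | ∀ j, Real.log (w j) + G j ω ≤ t}) =
      μ {ω | ∀ j, j ≠ i → Real.log (w j) + G j ω < Real.log (w i) + G i ω} *
      μ {ω | ∀ j, Real.log (w j) + G j ω ≤ t}) := by
  obtain ⟨n, rfl⟩ : ∃ n, N = n + 1 := ⟨N - 1, (Nat.succ_pred_eq_of_pos hN).symm⟩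
  set S := ∑ j, w j with hS_def
  have hS : 0 < S := Finset.sum_pos (fun j _ => hw j) Finset.univ_nonempty
  have hGmap : ∀ i, μ.map (G i) = gum := by
    intro i
    have := Measure.isProbabilityMeasure_map (μ := μ) (hGmeas i).aemeasurable
    refine Measure.ext_of_Iic _ _ (fun t => ?_)
    rw [Measure.map_apply (hGmeas i) measurableSet_Iic, gum_Iic]
    exact hgumbel i t
  have part1 : ∀ i t, μ {ω | Real.log (w i) + G i ω ≤ t} =
      ENNReal.ofReal (Real.exp (-(w i * Real.exp (-t)))) := by
    intro i t
    have hset : {ω | Real.log (w i) + G i ω ≤ t} = {ω | G i ω ≤ t - Real.log (w i)} := by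
      ext ω; constructor <;> intro h <;> simp only [mem_setOf_eq] at * <;> linarith
    rw [hset, hgumbel i]
    congr 2
    rw [show -(t - Real.log (w i)) = Real.log (w i) + -t by ring, Real.exp_add,
      Real.exp_log (hw i)]
  have hmax : ∀ t, μ {ω | ∀ j, Real.log (w j) + G j ω ≤ t} =
      ENNReal.ofReal (Real.exp (-(S * Real.exp (-t)))) := by
    intro t
    have hset : {ω | ∀ j, Real.log (w j) + G j ω ≤ t} =
        ⋂ j ∈ Finset.univ, G j ⁻¹' Iic (t - Real.log (w j)) := by
      ext ω
      simp only [mem_setOf_eq, Finset.mem_univ, iInter_true, mem_iInter, mem_preimage, mem_Iic]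
      exact forall_congr' fun j => by constructor <;> intro h <;> linarith
    rw [hset, hindep.measure_inter_preimage_eq_mul Finset.univ (fun j _ => measurableSet_Iic)]
    have hval : ∀ j, μ (G j ⁻¹' Iic (t - Real.log (w j))) =
        ENNReal.ofReal (Real.exp (-(w j * Real.exp (-t)))) := by
      intro j
      have hsj : G j ⁻¹' Iic (t - Real.log (w j)) = {ω | Real.log (w j) + G j ω ≤ t} := by
        ext ω; simp only [mem_preimage, mem_Iic, mem_setOf_eq]
        constructor <;> intro <;> linarith
      rw [hsj, part1]
    simp_rw [hval]
    rw [← ENNReal.ofReal_prod_of_nonneg (fun j _ => (Real.exp_pos _).le), ← Real.exp_sum]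
    congr 2
    rw [Finset.sum_neg_distrib, ← Finset.sum_mul]
  have hFmeas : Measurable (fun ω (j : Fin (n+1)) => G j ω) :=
    measurable_pi_iff.mpr hGmeas
  have hlaw : μ.map (fun ω (j : Fin (n+1)) => G j ω) = Measure.pi (fun _ => gum) := by
    symm
    apply Measure.pi_eq
    intro s hs
    rw [Measure.map_apply hFmeas (MeasurableSet.univ_pi hs)]
    have hset : (fun ω (j : Fin (n+1)) => G j ω) ⁻¹' univ.pi s =
        ⋂ j ∈ Finset.univ, G j ⁻¹' s j := by
      ext ω; simp
    rw [hset, hindep.measure_inter_preimage_eq_mul Finset.univ (fun j _ => hs j)]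
    refine Finset.prod_congr rfl fun j _ => ?_
    rw [← Measure.map_apply (hGmeas j) (hs j), hGmap j]
  have core : ∀ (i : Fin (n+1)) (b : ℝ),
      μ ({ω | ∀ j, j ≠ i → Real.log (w j) + G j ω < Real.log (w i) + G i ω} ∩
        {ω | Real.log (w i) + G i ω ≤ b}) =
      ENNReal.ofReal ((w i / S) * Real.exp (-(S * Real.exp (-b)))) := by
    intro i b
    have hAm : MeasurableSet {x : Fin (n+1) → ℝ |
        (∀ j, j ≠ i → Real.log (w j) + x j < Real.log (w i) + x i) ∧
          Real.log (w i) + x i ≤ b} := by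
      have h1 : MeasurableSet {x : Fin (n+1) → ℝ |
          ∀ j, j ≠ i → Real.log (w j) + x j < Real.log (w i) + x i} := by
        rw [setOf_forall]
        refine MeasurableSet.iInter fun j => ?_
        by_cases hj : j = i
        · simp [hj]
        · simp only [ne_eq, hj, not_false_eq_true, forall_true_left]
          exact measurableSet_lt (by fun_prop) (by fun_prop)
      have h2 : MeasurableSet {x : Fin (n+1) → ℝ | Real.log (w i) + x i ≤ b} :=
        measurableSet_le (by fun_prop) (by fun_prop)
      exact h1.inter h2
    have hpre : (fun ω (j : Fin (n+1)) => G j ω) ⁻¹' {x : Fin (n+1) → ℝ |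
        (∀ j, j ≠ i → Real.log (w j) + x j < Real.log (w i) + x i) ∧
          Real.log (w i) + x i ≤ b} =
        ({ω | ∀ j, j ≠ i → Real.log (w j) + G j ω < Real.log (w i) + G i ω} ∩
          {ω | Real.log (w i) + G i ω ≤ b}) := rfl
    rw [← hpre, ← Measure.map_apply hFmeas hAm, hlaw, gum_pi_core w hw i b]
  have part2 : ∀ i, μ {ω | ∀ j, j ≠ i → Real.log (w j) + G j ω < Real.log (w i) + G i ω} =
      ENNReal.ofReal (w i / S) := by
    intro i
    set A := {ω | ∀ j, j ≠ i → Real.log (w j) + G j ω < Real.log (w i) + G i ω} with hA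
    have hU : A = ⋃ k : ℕ, (A ∩ {ω | Real.log (w i) + G i ω ≤ (k : ℝ)}) := by
      ext ω
      simp only [mem_iUnion, mem_inter_iff, mem_setOf_eq]
      constructor
      · intro h
        obtain ⟨k, hk⟩ := exists_nat_ge (Real.log (w i) + G i ω)
        exact ⟨k, h, hk⟩
      · rintro ⟨k, hk, _⟩; exact hk
    have hmono : Monotone fun k : ℕ => A ∩ {ω | Real.log (w i) + G i ω ≤ (k : ℝ)} := by
      intro a b' hab
      apply inter_subset_inter_right
      intro ω hω
      simp only [mem_setOf_eq] at *
      exact hω.trans (by exact_mod_cast hab)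
    have h1 := tendsto_measure_iUnion_atTop (μ := μ) hmono
    rw [← hU] at h1
    have h2 : Tendsto (μ ∘ fun k : ℕ => A ∩ {ω | Real.log (w i) + G i ω ≤ (k : ℝ)}) atTop
        (𝓝 (ENNReal.ofReal (w i / S))) := by
      simp only [Function.comp_def, hA, core i]
      exact tend_aux S (w i / S) (le_of_lt (div_pos (hw i) hS))
    exact tendsto_nhds_unique h1 h2
  refine ⟨part1, part2, fun i t => ?_⟩
  have hset : {ω | ∀ j, j ≠ i → Real.log (w j) + G j ω < Real.log (w i) + G i ω} ∩
      {ω | ∀ j, Real.log (w j) + G j ω ≤ t} =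
      {ω | ∀ j, j ≠ i → Real.log (w j) + G j ω < Real.log (w i) + G i ω} ∩
      {ω | Real.log (w i) + G i ω ≤ t} := by
    ext ω
    simp only [mem_inter_iff, mem_setOf_eq]
    constructor
    · rintro ⟨h1, h2⟩; exact ⟨h1, h2 i⟩
    · rintro ⟨h1, h2⟩
      refine ⟨h1, fun j => ?_⟩
      by_cases hj : j = i
      · rw [hj]; exact h2
      · exact le_of_lt (lt_of_lt_of_le (h1 j hj) h2)
  rw [hset, core i t, part2 i, hmax t, ← ENNReal.ofReal_mul (le_of_lt (div_pos (hw i) hS))]
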